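/- For all m ≥ 0, the sum ∑_{k=0}^{m} P(4k) equals (P(4(m+1)) + 4·P(4m) + P(4(m-1)) - 1)/5, where P(-4) is interpreted via the backward extension of the Padovan recurrence (P(-4) = 0); equivalently, 5·∑_{k=0}^{m} P(4k) = P(4m+4) + 4·P(4m) + P(4m-4) - 1. -/

import Mathlib

theorem padovan_sum_4k (P : ℤ → ℤ) (h0 : P 0 = 1) (h1 : P 1 = 1) (h2 : P 2 = 1)
    (hrec : ∀ n : ℤ, P (n + 3) = P (n + 1) + P n) (m : ℕ) :
    5 * ∑ k ∈ Finset.range (m + 1), P (4 * k)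
      = P (4 * m + 4) + 4 * P (4 * m) + P (4 * (m : ℤ) - 4) - 1 := by
  induction m with
  | zero =>
    have e3 := hrec 0
    have e4 := hrec 1
    have em1 := hrec (-1)
    have em2 := hrec (-2)
    have em3 := hrec (-3)
    have em4 := hrec (-4)
    norm_num at e3 e4 em1 em2 em3 em4 ⊢
    linarith
  | succ m ih =>
    set n : ℤ := 4 * (m : ℤ) with hn
    have a1 := hrec (n - 4)
    have a2 := hrec (n - 3)
    have a3 := hrec (n - 2)
    have a4 := hrec (n - 1)
    have a5 := hrec n
    have a6 := hrec (n + 1)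
    have a7 := hrec (n + 2)
    have a8 := hrec (n + 3)
    have a9 := hrec (n + 5)
    rw [Finset.sum_range_succ]
    push_cast at ih ⊢
    set S := ∑ k ∈ Finset.range (m + 1), P (4 * (k : ℤ)) with hS
    ring_nf at a1 a2 a3 a4 a5 a6 a7 a8 a9 ih ⊢
    simp only [hn] at a1 a2 a3 a4 a5 a6 a7 a8 a9 ih
    ring_nf at a1 a2 a3 a4 a5 a6 a7 a8 a9 ih ⊢
    linarith
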